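/- arXiv:1901.09122 — 2 statements merged into one kernel-verified Lean document; each statement's English description precedes it below -/
import Mathlib

section
/- Let σ₀ > -3/2 and -3/2 < σ ≤ σ₀. Then there exists a constant c₀ = c(σ₀, σ) such that for every f ∈ 𝒳^{σ₀}(ℝ³) ∩ L²(ℝ³), ‖f‖_{𝒳^σ} ≤ c₀ ‖f‖_{L²}^{1-θ} ‖f‖_{𝒳^{σ₀}}^{θ}, where θ = (σ + 3/2)/(σ₀ + 3/2). -/
open MeasureTheory Real Set Metric Measure
open scoped ENNReal NNReal

section Polar

variable {E : Type*} [NormedAddCommGroup E] [NormedSpace ℝ E] [MeasurableSpace E] [BorelSpace E]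
  [Nontrivial E] [FiniteDimensional ℝ E] (μ : Measure E) [μ.IsAddHaarMeasure]

lemma my_lintegral_fun_norm_addHaar (g : ℝ → ℝ≥0∞) (hg : Measurable g) :
    ∫⁻ x, g ‖x‖ ∂μ =
      μ.toSphere univ *
        ∫⁻ y in Ioi (0 : ℝ), ENNReal.ofReal (y ^ (Module.finrank ℝ E - 1)) * g y := by
  have h1 : Measurable fun x : sphere (0:E) 1 × Ioi (0:ℝ) => g x.2 :=
    hg.comp (measurable_subtype_coe.comp measurable_snd)
  have h2 : Measurable fun y : Ioi (0:ℝ) => g ↑y := hg.comp measurable_subtype_coe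
  calc
    ∫⁻ x, g ‖x‖ ∂μ = ∫⁻ x : ({(0)}ᶜ : Set E), g ‖x.1‖ ∂(μ.comap (↑)) := by
      rw [show ∫⁻ x : ({(0)}ᶜ : Set E), g ‖x.1‖ ∂(μ.comap (↑)) =
            ∫⁻ x in ({(0)}ᶜ : Set E), g ‖x‖ ∂μ from
          lintegral_subtype_comap (measurableSet_singleton 0).compl fun x => g ‖x‖,
        MeasureTheory.restrict_compl_singleton]
    _ = ∫⁻ x : sphere (0 : E) 1 × Ioi (0 : ℝ), g x.2
          ∂μ.toSphere.prod (.volumeIoiPow (Module.finrank ℝ E - 1)) :=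
      by
        refine Eq.trans ?_ (μ.measurePreserving_homeomorphUnitSphereProd.lintegral_comp_emb
          (Homeomorph.measurableEmbedding _) fun p => g p.2)
        simp only [homeomorphUnitSphereProd_apply_snd_coe, div_one]
    _ = μ.toSphere univ *
          ∫⁻ y : Ioi (0:ℝ), g y ∂(Measure.volumeIoiPow (Module.finrank ℝ E - 1)) := by
      rw [lintegral_prod _ h1.aemeasurable]
      simp [lintegral_const, mul_comm]
    _ = _ := by
      rw [Measure.volumeIoiPow, lintegral_withDensity_eq_lintegral_mul _
        (by measurability) h2,
        show ∫⁻ y : Ioi (0:ℝ),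
            ((fun r : Ioi (0:ℝ) => ENNReal.ofReal (r.1 ^ (Module.finrank ℝ E - 1))) *
              fun y : Ioi (0:ℝ) => g ↑y) y ∂((volume : Measure ℝ).comap (↑)) =
          ∫⁻ y in Ioi (0:ℝ), ENNReal.ofReal (y ^ (Module.finrank ℝ E - 1)) * g y from
        lintegral_subtype_comap measurableSet_Ioi
          fun y => ENNReal.ofReal (y ^ (Module.finrank ℝ E - 1)) * g y]

end Polar

local notation "E3" => EuclideanSpace ℝ (Fin 3)

lemma ball_lintegral_rpow {t lam : ℝ} (ht : -3 < t) (hlam : 0 < lam) :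
    ∫⁻ x : E3 in Metric.ball 0 lam, ENNReal.ofReal (‖x‖ ^ t) =
      (volume : Measure E3).toSphere univ * ENNReal.ofReal (lam ^ (t + 3) / (t + 3)) := by
  have hgm : Measurable fun y : ℝ =>
      (Set.Iio lam).indicator (fun y => ENNReal.ofReal (y ^ t)) y :=
    Measurable.indicator (by fun_prop) measurableSet_Iio
  have h1 : ∫⁻ x : E3 in Metric.ball 0 lam, ENNReal.ofReal (‖x‖ ^ t)
      = ∫⁻ x : E3, (Set.Iio lam).indicator (fun y => ENNReal.ofReal (y ^ t)) ‖x‖ := by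
    rw [← lintegral_indicator measurableSet_ball]
    congr 1
    funext x
    by_cases hx : ‖x‖ < lam
    · rw [Set.indicator_of_mem (mem_ball_zero_iff.2 hx), Set.indicator_of_mem (mem_Iio.2 hx)]
    · rw [Set.indicator_of_notMem (fun hh => hx (mem_ball_zero_iff.1 hh)),
        Set.indicator_of_notMem (fun hh => hx (mem_Iio.1 hh))]
  rw [h1, my_lintegral_fun_norm_addHaar volume _ hgm]
  congr 1
  have hdim : Module.finrank ℝ E3 - 1 = 2 := by simp [finrank_euclideanSpace]
  rw [hdim]
  have h2 : ∀ y ∈ Ioi (0:ℝ), ENNReal.ofReal (y ^ (2:ℕ)) *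
        (Set.Iio lam).indicator (fun y => ENNReal.ofReal (y ^ t)) y
      = (Set.Iio lam).indicator (fun y => ENNReal.ofReal (y ^ (t + 2))) y := by
    intro y hy
    have hy0 : (0:ℝ) < y := hy
    by_cases h : y < lam
    · rw [Set.indicator_of_mem (mem_Iio.2 h), Set.indicator_of_mem (mem_Iio.2 h),
        ← ENNReal.ofReal_mul (by positivity)]
      congr 1
      rw [← Real.rpow_natCast y 2, ← Real.rpow_add hy0]
      norm_num [add_comm]
    · rw [Set.indicator_of_notMem (fun hh => h (mem_Iio.1 hh)),
        Set.indicator_of_notMem (fun hh => h (mem_Iio.1 hh)), mul_zero]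
  rw [setLIntegral_congr_fun measurableSet_Ioi h2,
    lintegral_indicator measurableSet_Iio, Measure.restrict_restrict measurableSet_Iio,
    Set.Iio_inter_Ioi]
  have hint : IntegrableOn (fun y : ℝ => y ^ (t + 2)) (Ioo 0 lam) :=
    (intervalIntegral.intervalIntegrable_rpow' (by linarith)).1.mono_set Ioo_subset_Ioc_self
  rw [← ofReal_integral_eq_lintegral_ofReal hint ?nn]
  case nn =>
    filter_upwards [ae_restrict_mem measurableSet_Ioo] with y hy
    exact Real.rpow_nonneg hy.1.le _
  congr 1
  rw [← integral_Ioc_eq_integral_Ioo, ← intervalIntegral.integral_of_le hlam.le,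
    integral_rpow (Or.inl (by linarith)), Real.zero_rpow (by linarith),
    show t + 2 + 1 = t + 3 by ring]
  ring


/-- `𝒳^{σ₀} ∩ L² ↪ 𝒳^σ` for `-3/2 < σ ≤ σ₀`:
`‖f‖_{𝒳^σ} ≤ c₀ ‖f‖_{L²}^{1-θ} ‖f‖_{𝒳^{σ₀}}^θ` with `θ = (σ+3/2)/(σ₀+3/2)`.
Stated on the Fourier side with `F = 𝓕 f`, `‖f‖_{L²} = (∫‖F‖²)^{1/2}` (Plancherel, up to
a fixed constant absorbed in `c₀`) and `‖f‖_{𝒳^τ} = ∫‖ξ‖^τ‖F(ξ)‖ dξ`. -/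
theorem X_sigma_interpolation (σ₀ σ : ℝ) (h₀ : -(3/2) < σ₀) (h₁ : -(3/2) < σ) (h₂ : σ ≤ σ₀) :
    ∃ c₀ : ℝ, 0 < c₀ ∧ ∀ F : EuclideanSpace ℝ (Fin 3) → ℂ,
      Integrable (fun ξ => ‖F ξ‖ ^ 2) →
      Integrable (fun ξ => ‖ξ‖ ^ σ₀ * ‖F ξ‖) →
      ∫ ξ, ‖ξ‖ ^ σ * ‖F ξ‖ ≤
        c₀ * Real.sqrt (∫ ξ, ‖F ξ‖ ^ 2) ^ (1 - (σ + 3/2) / (σ₀ + 3/2)) *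
          (∫ ξ, ‖ξ‖ ^ σ₀ * ‖F ξ‖) ^ ((σ + 3/2) / (σ₀ + 3/2)) := by
  have hd₀ : (0:ℝ) < σ₀ + 3/2 := by linarith
  have hdσ : (0:ℝ) < σ + 3/2 := by linarith
  set θ : ℝ := (σ + 3/2) / (σ₀ + 3/2) with hθ
  set S : ℝ≥0∞ := (volume : Measure E3).toSphere univ with hSdef
  have hSne : S ≠ ⊤ := measure_ne_top _ _
  set A : ℝ := (S.toReal / (σ * 2 + 3)) ^ ((1:ℝ)/2) with hA
  have hA0 : 0 ≤ A := Real.rpow_nonneg (div_nonneg ENNReal.toReal_nonneg (by linarith)) _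
  refine ⟨A + 1, by linarith, ?_⟩
  intro F hF2 hFX
  set L : ℝ := Real.sqrt (∫ ξ : E3, ‖F ξ‖ ^ 2) with hL
  set M : ℝ := ∫ ξ : E3, ‖ξ‖ ^ σ₀ * ‖F ξ‖ with hM
  have hL0 : 0 ≤ L := Real.sqrt_nonneg _
  have hXnn : ∀ ξ : E3, 0 ≤ ‖ξ‖ ^ σ₀ * ‖F ξ‖ := fun ξ =>
    mul_nonneg (Real.rpow_nonneg (norm_nonneg _) _) (norm_nonneg _)
  have hM0 : 0 ≤ M := integral_nonneg hXnn
  have hF2nn : (0:ℝ) ≤ ∫ ξ : E3, ‖F ξ‖ ^ 2 := integral_nonneg fun ξ => sq_nonneg _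
  have hFm : AEMeasurable (fun ξ : E3 => ‖F ξ‖) volume := by
    have h := hF2.aestronglyMeasurable.aemeasurable
    have he : (fun ξ : E3 => ‖F ξ‖) = fun ξ => Real.sqrt (‖F ξ‖ ^ 2) := by
      funext ξ; rw [Real.sqrt_sq (norm_nonneg _)]
    rw [he]
    exact Real.continuous_sqrt.measurable.comp_aemeasurable h
  have hRHS0 : 0 ≤ (A + 1) * L ^ (1 - θ) * M ^ θ :=
    mul_nonneg (mul_nonneg (by linarith) (Real.rpow_nonneg hL0 _)) (Real.rpow_nonneg hM0 _)
  -- degenerate case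
  have key0 : (∀ᵐ ξ : E3, ‖F ξ‖ = 0) →
      ∫ ξ : E3, ‖ξ‖ ^ σ * ‖F ξ‖ ≤ (A + 1) * L ^ (1 - θ) * M ^ θ := by
    intro h0
    have hz : ∫ ξ : E3, ‖ξ‖ ^ σ * ‖F ξ‖ = 0 := by
      rw [show (0:ℝ) = ∫ _ : E3, (0:ℝ) from (integral_zero _ _).symm]
      apply integral_congr_ae
      filter_upwards [h0] with ξ hξ
      simp [hξ]
    rw [hz]; exact hRHS0
  rcases eq_or_lt_of_le hL0 with hLz | hLpos
  · refine key0 ?_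
    have hXz : ∫ ξ : E3, ‖F ξ‖ ^ 2 = 0 := by
      have hsq := Real.sq_sqrt hF2nn
      rw [← hL] at hsq
      rw [← hsq, ← hLz]
      norm_num
    have hae := (integral_eq_zero_iff_of_nonneg (fun ξ => sq_nonneg (‖F ξ‖)) hF2).1 hXz
    filter_upwards [hae] with ξ hξ
    exact (pow_eq_zero_iff two_ne_zero).1 hξ
  rcases eq_or_lt_of_le hM0 with hMz | hMpos
  · refine key0 ?_
    have hMz' : ∫ ξ : E3, ‖ξ‖ ^ σ₀ * ‖F ξ‖ = 0 := by rw [← hM]; exact hMz.symm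
    have hae := (integral_eq_zero_iff_of_nonneg hXnn hFX).1 hMz'
    have hne : ∀ᵐ ξ : E3, ξ ≠ 0 := by
      rw [ae_iff]
      simp only [ne_eq, not_not]
      have hset : {ξ : E3 | ξ = 0} = {0} := by ext ξ; simp
      rw [hset]
      exact measure_singleton 0
    filter_upwards [hae, hne] with ξ hξ hξ0
    have hn : 0 < ‖ξ‖ := norm_pos_iff.2 hξ0
    have hrne : ‖ξ‖ ^ σ₀ ≠ 0 := ne_of_gt (Real.rpow_pos_of_pos hn _)
    rcases mul_eq_zero.1 hξ with h | h
    · exact absurd h hrne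
    · exact h
  -- main case: L > 0 and M > 0
  have hconj : (2:ℝ).HolderConjugate 2 := Real.HolderConjugate.two_two
  have hmeas_rσ : Measurable fun ξ : E3 => ‖ξ‖ ^ σ := by fun_prop
  have key : ∀ lam : ℝ, 0 < lam →
      ∫ ξ : E3, ‖ξ‖ ^ σ * ‖F ξ‖ ≤ A * lam ^ (σ + 3/2) * L + lam ^ (σ - σ₀) * M := by
    intro lam hlam
    have hBnn1 : 0 ≤ A * lam ^ (σ + 3/2) * L :=
      mul_nonneg (mul_nonneg hA0 (Real.rpow_nonneg hlam.le _)) hL0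
    have hBnn2 : 0 ≤ lam ^ (σ - σ₀) * M := mul_nonneg (Real.rpow_nonneg hlam.le _) hM0
    have hT : ∫ ξ : E3, ‖ξ‖ ^ σ * ‖F ξ‖
        = (∫⁻ ξ : E3, ENNReal.ofReal (‖ξ‖ ^ σ * ‖F ξ‖)).toReal := by
      rw [integral_eq_lintegral_of_nonneg_ae
        (Filter.Eventually.of_forall fun ξ => mul_nonneg (Real.rpow_nonneg (norm_nonneg _) _)
          (norm_nonneg _))
        ((hmeas_rσ.aemeasurable.mul hFm).aestronglyMeasurable)]
    rw [hT]
    refine ENNReal.toReal_le_of_le_ofReal (by linarith) ?_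
    rw [← lintegral_add_compl (fun ξ : E3 => ENNReal.ofReal (‖ξ‖ ^ σ * ‖F ξ‖))
      (measurableSet_ball : MeasurableSet (Metric.ball (0:E3) lam))]
    have low : ∫⁻ ξ in Metric.ball (0:E3) lam, ENNReal.ofReal (‖ξ‖ ^ σ * ‖F ξ‖)
        ≤ ENNReal.ofReal (A * lam ^ (σ + 3/2) * L) := by
      have f1 : (∫⁻ ξ in Metric.ball (0:E3) lam, ENNReal.ofReal (‖ξ‖ ^ σ) ^ (2:ℝ)) ^ (1/(2:ℝ))
          = ENNReal.ofReal (A * lam ^ (σ + 3/2)) := by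
        have e1 : ∀ ξ : E3, ENNReal.ofReal (‖ξ‖ ^ σ) ^ (2:ℝ)
            = ENNReal.ofReal (‖ξ‖ ^ (σ * 2)) := by
          intro ξ
          rw [ENNReal.ofReal_rpow_of_nonneg (Real.rpow_nonneg (norm_nonneg _) _)
            (by norm_num : (0:ℝ) ≤ 2)]
          congr 1
          exact (Real.rpow_mul (norm_nonneg _) σ 2).symm
        rw [lintegral_congr e1, ball_lintegral_rpow (by linarith : (-3:ℝ) < σ * 2) hlam,
          ← hSdef, ← ENNReal.ofReal_toReal hSne,
          ← ENNReal.ofReal_mul ENNReal.toReal_nonneg,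
          ENNReal.ofReal_rpow_of_nonneg
            (mul_nonneg ENNReal.toReal_nonneg
              (div_nonneg (Real.rpow_nonneg hlam.le _) (by linarith)))
            (by norm_num : (0:ℝ) ≤ 1/2)]
        congr 1
        rw [show S.toReal * (lam ^ (σ * 2 + 3) / (σ * 2 + 3))
            = (S.toReal / (σ * 2 + 3)) * lam ^ (σ * 2 + 3) by ring,
          Real.mul_rpow (div_nonneg ENNReal.toReal_nonneg (by linarith))
            (Real.rpow_nonneg hlam.le _),
          ← Real.rpow_mul hlam.le,
          show (σ * 2 + 3) * (1/(2:ℝ)) = σ + 3/2 by ring]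
      have f2 : (∫⁻ ξ in Metric.ball (0:E3) lam, ENNReal.ofReal ‖F ξ‖ ^ (2:ℝ)) ^ (1/(2:ℝ))
          ≤ ENNReal.ofReal L := by
        have e2 : ∀ ξ : E3, ENNReal.ofReal ‖F ξ‖ ^ (2:ℝ) = ENNReal.ofReal (‖F ξ‖ ^ 2) := by
          intro ξ
          rw [ENNReal.ofReal_rpow_of_nonneg (norm_nonneg _) (by norm_num : (0:ℝ) ≤ 2)]
          congr 1
          rw [show ((2:ℝ)) = ((2:ℕ):ℝ) by norm_num, Real.rpow_natCast]
        have h2' : ∫⁻ ξ : E3, ENNReal.ofReal (‖F ξ‖ ^ 2) = ENNReal.ofReal (L ^ 2) := by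
          rw [← ofReal_integral_eq_lintegral_ofReal hF2
            (Filter.Eventually.of_forall fun ξ => sq_nonneg _)]
          congr 1
          rw [hL, Real.sq_sqrt hF2nn]
        calc (∫⁻ ξ in Metric.ball (0:E3) lam, ENNReal.ofReal ‖F ξ‖ ^ (2:ℝ)) ^ (1/(2:ℝ))
            ≤ (∫⁻ ξ : E3, ENNReal.ofReal (‖F ξ‖ ^ 2)) ^ (1/(2:ℝ)) := by
              refine ENNReal.rpow_le_rpow ?_ (by norm_num)
              rw [lintegral_congr e2]
              exact setLIntegral_le_lintegral _ _
          _ = (ENNReal.ofReal (L ^ 2)) ^ (1/(2:ℝ)) := by rw [h2']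
          _ = ENNReal.ofReal L := by
              rw [ENNReal.ofReal_rpow_of_nonneg (sq_nonneg _) (by norm_num : (0:ℝ) ≤ 1/2)]
              congr 1
              rw [← Real.rpow_natCast L 2, ← Real.rpow_mul hL0]
              norm_num
      calc ∫⁻ ξ in Metric.ball (0:E3) lam, ENNReal.ofReal (‖ξ‖ ^ σ * ‖F ξ‖)
          = ∫⁻ ξ in Metric.ball (0:E3) lam,
              ((fun ξ : E3 => ENNReal.ofReal (‖ξ‖ ^ σ)) * fun ξ : E3 => ENNReal.ofReal ‖F ξ‖) ξ :=
            lintegral_congr fun ξ => by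
              simp only [Pi.mul_apply]
              exact ENNReal.ofReal_mul (Real.rpow_nonneg (norm_nonneg _) _)
        _ ≤ (∫⁻ ξ in Metric.ball (0:E3) lam, ENNReal.ofReal (‖ξ‖ ^ σ) ^ (2:ℝ)) ^ (1/(2:ℝ)) *
            (∫⁻ ξ in Metric.ball (0:E3) lam, ENNReal.ofReal ‖F ξ‖ ^ (2:ℝ)) ^ (1/(2:ℝ)) :=
            ENNReal.lintegral_mul_le_Lp_mul_Lq _ hconj
              hmeas_rσ.ennreal_ofReal.aemeasurable hFm.ennreal_ofReal.restrict
        _ ≤ ENNReal.ofReal (A * lam ^ (σ + 3/2)) * ENNReal.ofReal L := by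
            rw [f1]; exact mul_le_mul_right f2 _
        _ = ENNReal.ofReal (A * lam ^ (σ + 3/2) * L) :=
            (ENNReal.ofReal_mul (mul_nonneg hA0 (Real.rpow_nonneg hlam.le _))).symm
    have high : ∫⁻ ξ in (Metric.ball (0:E3) lam)ᶜ, ENNReal.ofReal (‖ξ‖ ^ σ * ‖F ξ‖)
        ≤ ENNReal.ofReal (lam ^ (σ - σ₀) * M) := by
      have hpt : ∀ᵐ ξ ∂(volume.restrict (Metric.ball (0:E3) lam)ᶜ),
          ENNReal.ofReal (‖ξ‖ ^ σ * ‖F ξ‖)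
            ≤ ENNReal.ofReal (lam ^ (σ - σ₀)) * ENNReal.ofReal (‖ξ‖ ^ σ₀ * ‖F ξ‖) := by
        filter_upwards [ae_restrict_mem measurableSet_ball.compl] with ξ hξ
        have hξn : lam ≤ ‖ξ‖ := by
          have := hξ
          simp only [Set.mem_compl_iff, mem_ball_zero_iff, not_lt] at this
          exact this
        have hξ0 : 0 < ‖ξ‖ := hlam.trans_le hξn
        rw [← ENNReal.ofReal_mul (Real.rpow_nonneg hlam.le _)]
        apply ENNReal.ofReal_le_ofReal
        have hsplit : ‖ξ‖ ^ σ = ‖ξ‖ ^ (σ - σ₀) * ‖ξ‖ ^ σ₀ := by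
          rw [← Real.rpow_add hξ0]; ring_nf
        rw [hsplit, mul_assoc, ← mul_assoc (lam ^ (σ - σ₀))]
        calc ‖ξ‖ ^ (σ - σ₀) * (‖ξ‖ ^ σ₀ * ‖F ξ‖)
            ≤ lam ^ (σ - σ₀) * (‖ξ‖ ^ σ₀ * ‖F ξ‖) :=
              mul_le_mul_of_nonneg_right
                (Real.rpow_le_rpow_of_nonpos hlam hξn (by linarith)) (hXnn ξ)
          _ = lam ^ (σ - σ₀) * ‖ξ‖ ^ σ₀ * ‖F ξ‖ := by ring
      calc ∫⁻ ξ in (Metric.ball (0:E3) lam)ᶜ, ENNReal.ofReal (‖ξ‖ ^ σ * ‖F ξ‖)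
          ≤ ∫⁻ ξ in (Metric.ball (0:E3) lam)ᶜ,
              ENNReal.ofReal (lam ^ (σ - σ₀)) * ENNReal.ofReal (‖ξ‖ ^ σ₀ * ‖F ξ‖) :=
            lintegral_mono_ae hpt
        _ = ENNReal.ofReal (lam ^ (σ - σ₀)) *
              ∫⁻ ξ in (Metric.ball (0:E3) lam)ᶜ, ENNReal.ofReal (‖ξ‖ ^ σ₀ * ‖F ξ‖) :=
            lintegral_const_mul' _ _ ENNReal.ofReal_ne_top
        _ ≤ ENNReal.ofReal (lam ^ (σ - σ₀)) * ∫⁻ ξ : E3, ENNReal.ofReal (‖ξ‖ ^ σ₀ * ‖F ξ‖) :=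
            mul_le_mul_right (setLIntegral_le_lintegral _ _) _
        _ = ENNReal.ofReal (lam ^ (σ - σ₀)) * ENNReal.ofReal M := by
            rw [← ofReal_integral_eq_lintegral_ofReal hFX
              (Filter.Eventually.of_forall hXnn), hM]
        _ = ENNReal.ofReal (lam ^ (σ - σ₀) * M) :=
            (ENNReal.ofReal_mul (Real.rpow_nonneg hlam.le _)).symm
    exact le_trans (add_le_add low high) (le_of_eq (ENNReal.ofReal_add hBnn1 hBnn2).symm)
  -- optimize over lam
  set lam : ℝ := (M / L) ^ ((1:ℝ) / (σ₀ + 3/2)) with hlamdef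
  have hML : 0 < M / L := div_pos hMpos hLpos
  have hlam : 0 < lam := Real.rpow_pos_of_pos hML _
  have h1 : lam ^ (σ + 3/2) = (M / L) ^ θ := by
    rw [hlamdef, ← Real.rpow_mul hML.le]
    congr 1
    rw [hθ, one_div_mul_eq_div]
  have h2 : lam ^ (σ - σ₀) = (M / L) ^ (θ - 1) := by
    rw [hlamdef, ← Real.rpow_mul hML.le]
    congr 1
    rw [hθ, one_div_mul_eq_div, ← div_self (ne_of_gt hd₀), div_sub_div_same]
    congr 1
    ring
  have hk := key lam hlam
  rw [h1, h2] at hk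
  refine hk.trans (le_of_eq ?_)
  have hLθ : (0:ℝ) < L ^ θ := Real.rpow_pos_of_pos hLpos _
  have hMθ : (0:ℝ) < M ^ θ := Real.rpow_pos_of_pos hMpos _
  rw [Real.div_rpow hM0 hL0, Real.div_rpow hM0 hL0,
    Real.rpow_sub hMpos θ 1, Real.rpow_sub hLpos θ 1, Real.rpow_sub hLpos 1 θ,
    Real.rpow_one, Real.rpow_one]
  field_simp
end

section
/- Let -3/2 < σ < -1. There exists a constant c_σ such that for every f ∈ L²(ℝ³) ∩ 𝒳^{-1}(ℝ³), ‖f‖_{𝒳^σ} ≤ c_σ ‖f‖_{L²}^{-2σ-2} ‖f‖_{𝒳^{-1}}^{2σ+3}. -/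
open MeasureTheory Real Set

open Metric
open scoped ENNReal

lemma integrableOn_norm_rpow_unitBall {t : ℝ} (h1 : -3 < t) (h2 : t < 0) :
    IntegrableOn (fun x : EuclideanSpace ℝ (Fin 3) => ‖x‖ ^ t) (Metric.ball 0 1) := by
  have hmeas : Measurable fun x : EuclideanSpace ℝ (Fin 3) => ‖x‖ ^ t := by fun_prop
  have hnn : ∀ x : EuclideanSpace ℝ (Fin 3), 0 ≤ ‖x‖ ^ t := fun x => Real.rpow_nonneg (norm_nonneg x) t
  set μb := volume.restrict (Metric.ball (0 : EuclideanSpace ℝ (Fin 3)) 1) with hμb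
  refine ⟨hmeas.aestronglyMeasurable, ?_⟩
  rw [hasFiniteIntegral_iff_ofReal (ae_of_all _ hnn)]
  rw [lintegral_eq_lintegral_meas_le μb (ae_of_all _ hnn) hmeas.aemeasurable]
  set mB := volume (Metric.ball (0 : EuclideanSpace ℝ (Fin 3)) 1) with hmB
  have key : ∀ s : ℝ, 0 < s → μb {x | s ≤ ‖x‖ ^ t} ≤ ENNReal.ofReal (s ^ (3 * t⁻¹)) * mB := by
    intro s hs
    have hsub : {x : EuclideanSpace ℝ (Fin 3) | s ≤ ‖x‖ ^ t} ⊆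
        Metric.closedBall 0 (s ^ t⁻¹) := by
      intro x hx
      simp only [mem_setOf_eq] at hx
      rcases eq_or_ne x 0 with rfl | hx0
      · simp [Real.zero_rpow h2.ne] at hx; linarith
      · have hxpos : 0 < ‖x‖ := norm_pos_iff.mpr hx0
        rw [Metric.mem_closedBall, dist_zero_right]
        exact (Real.le_rpow_inv_iff_of_neg hxpos hs h2).mpr hx
    calc μb {x | s ≤ ‖x‖ ^ t} ≤ volume {x : EuclideanSpace ℝ (Fin 3) | s ≤ ‖x‖ ^ t} :=
          Measure.restrict_le_self _
      _ ≤ volume (Metric.closedBall (0 : EuclideanSpace ℝ (Fin 3)) (s ^ t⁻¹)) :=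
          measure_mono hsub
      _ = ENNReal.ofReal ((s ^ t⁻¹) ^ (Module.finrank ℝ (EuclideanSpace ℝ (Fin 3)))) * mB :=
          Measure.addHaar_closedBall _ _ (Real.rpow_nonneg hs.le _)
      _ = ENNReal.ofReal (s ^ (3 * t⁻¹)) * mB := by
          congr 1
          rw [show Module.finrank ℝ (EuclideanSpace ℝ (Fin 3)) = 3 by simp]
          rw [← Real.rpow_natCast (s ^ t⁻¹) 3, ← Real.rpow_mul hs.le]
          norm_num [mul_comm]
  have key2 : ∀ s : ℝ, μb {x | s ≤ ‖x‖ ^ t} ≤ mB := by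
    intro s
    calc μb {x | s ≤ ‖x‖ ^ t} ≤ μb univ := measure_mono (subset_univ _)
      _ = mB := by rw [hμb, Measure.restrict_apply_univ]
  have hexp : 3 * t⁻¹ < -1 := by
    have hinv : t⁻¹ < 0 := inv_neg''.mpr h2
    have h3t : (0:ℝ) < 3 + t := by linarith
    have := mul_neg_of_pos_of_neg h3t hinv
    rw [add_mul, mul_inv_cancel₀ h2.ne] at this
    linarith
  calc ∫⁻ s in Ioi (0:ℝ), μb {x | s ≤ ‖x‖ ^ t}
      ≤ ∫⁻ s in Ioc (0:ℝ) 1 ∪ Ioi 1, μb {x | s ≤ ‖x‖ ^ t} :=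
        lintegral_mono_set Ioi_subset_Ioc_union_Ioi
    _ ≤ (∫⁻ s in Ioc (0:ℝ) 1, μb {x | s ≤ ‖x‖ ^ t}) +
        ∫⁻ s in Ioi (1:ℝ), μb {x | s ≤ ‖x‖ ^ t} := lintegral_union_le _ _ _
    _ < ∞ := by
        refine ENNReal.add_lt_top.2 ⟨?_, ?_⟩
        · calc ∫⁻ s in Ioc (0:ℝ) 1, μb {x | s ≤ ‖x‖ ^ t}
              ≤ ∫⁻ _ in Ioc (0:ℝ) 1, mB := lintegral_mono fun s => key2 s
            _ = mB * volume (Ioc (0:ℝ) 1) := by rw [setLIntegral_const]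
            _ < ∞ := by
                apply ENNReal.mul_lt_top measure_ball_lt_top
                simp
        · calc ∫⁻ s in Ioi (1:ℝ), μb {x | s ≤ ‖x‖ ^ t}
              ≤ ∫⁻ s in Ioi (1:ℝ), ENNReal.ofReal (s ^ (3 * t⁻¹)) * mB :=
                setLIntegral_mono' measurableSet_Ioi fun s hs => key s (lt_trans one_pos hs)
            _ = (∫⁻ s in Ioi (1:ℝ), ENNReal.ofReal (s ^ (3 * t⁻¹))) * mB :=
                lintegral_mul_const' _ _ measure_ball_lt_top.ne
            _ < ∞ := ENNReal.mul_lt_top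
                ((integrableOn_Ioi_rpow_of_lt hexp one_pos).setLIntegral_lt_top)
                measure_ball_lt_top

lemma integrableOn_norm_rpow_ball {t : ℝ} (h1 : -3 < t) (h2 : t < 0) {l : ℝ} (hl : 0 < l) :
    IntegrableOn (fun x : EuclideanSpace ℝ (Fin 3) => ‖x‖ ^ t) (Metric.ball 0 l) := by
  have hg : Integrable
      ((Metric.ball (0:EuclideanSpace ℝ (Fin 3)) 1).indicator (fun x => ‖x‖ ^ t)) :=
    (integrable_indicator_iff measurableSet_ball).mpr (integrableOn_norm_rpow_unitBall h1 h2)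
  have hg2 : Integrable (fun x : EuclideanSpace ℝ (Fin 3) =>
      l ^ t * ((Metric.ball (0:EuclideanSpace ℝ (Fin 3)) 1).indicator
        (fun x => ‖x‖ ^ t) (l⁻¹ • x))) :=
    (hg.comp_smul (inv_ne_zero hl.ne')).const_mul _
  rw [← integrable_indicator_iff measurableSet_ball]
  have heq : ∀ x : EuclideanSpace ℝ (Fin 3),
      (Metric.ball (0:EuclideanSpace ℝ (Fin 3)) l).indicator (fun x => ‖x‖ ^ t) x =
      l ^ t * ((Metric.ball (0:EuclideanSpace ℝ (Fin 3)) 1).indicator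
        (fun x => ‖x‖ ^ t) (l⁻¹ • x)) := by
    intro x
    have hmem : l⁻¹ • x ∈ Metric.ball (0:EuclideanSpace ℝ (Fin 3)) 1 ↔
        x ∈ Metric.ball (0:EuclideanSpace ℝ (Fin 3)) l := by
      rw [mem_ball_zero_iff, mem_ball_zero_iff, norm_smul, norm_inv, Real.norm_eq_abs,
        abs_of_pos hl, inv_mul_lt_iff₀ hl, mul_one]
    by_cases hx : x ∈ Metric.ball (0:EuclideanSpace ℝ (Fin 3)) l
    · rw [indicator_of_mem hx, indicator_of_mem (hmem.mpr hx)]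
      rw [norm_smul, norm_inv, Real.norm_eq_abs, abs_of_pos hl,
        Real.mul_rpow (inv_nonneg.mpr hl.le) (norm_nonneg x),
        Real.inv_rpow hl.le, ← mul_assoc, mul_inv_cancel₀ (Real.rpow_pos_of_pos hl t).ne',
        one_mul]
    · rw [indicator_of_notMem hx, indicator_of_notMem (fun h => hx (hmem.mp h)), mul_zero]
  exact hg2.congr (ae_of_all _ fun x => (heq x).symm)

lemma setIntegral_norm_rpow_ball {t : ℝ} (h1 : -3 < t) (h2 : t < 0) {l : ℝ} (hl : 0 < l) :
    ∫ x in Metric.ball (0:EuclideanSpace ℝ (Fin 3)) l, ‖x‖ ^ t =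
      l ^ (t + 3) * ∫ x in Metric.ball (0:EuclideanSpace ℝ (Fin 3)) 1, ‖x‖ ^ t := by
  have h := MeasureTheory.Measure.setIntegral_comp_smul_of_pos volume
    (fun x : EuclideanSpace ℝ (Fin 3) => ‖x‖ ^ t) (Metric.ball 0 1) hl
  rw [smul_unitBall_of_pos hl] at h
  have hL : ∫ x in Metric.ball (0:EuclideanSpace ℝ (Fin 3)) 1, ‖l • x‖ ^ t =
      l ^ t * ∫ x in Metric.ball (0:EuclideanSpace ℝ (Fin 3)) 1, ‖x‖ ^ t := by
    rw [← integral_const_mul]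
    refine setIntegral_congr_fun measurableSet_ball fun x _ => ?_
    rw [norm_smul, Real.norm_eq_abs, abs_of_pos hl, Real.mul_rpow hl.le (norm_nonneg x)]
  rw [hL] at h
  have hfr : Module.finrank ℝ (EuclideanSpace ℝ (Fin 3)) = 3 := by simp
  rw [hfr, smul_eq_mul] at h
  have hl3 : (0:ℝ) < l ^ (3:ℕ) := by positivity
  have := congrArg (fun y => l ^ (3:ℕ) * y) h
  simp only [← mul_assoc, mul_inv_cancel₀ hl3.ne', one_mul] at this
  rw [← this, Real.rpow_add hl, show (3:ℝ) = ((3:ℕ):ℝ) by norm_num, Real.rpow_natCast]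
  ring

/-- Interpolation for `-3/2 < σ < -1`:
`‖f‖_{𝒳^σ} ≤ c_σ ‖f‖_{L²}^{-2σ-2} ‖f‖_{𝒳^{-1}}^{2σ+3}` for `f ∈ L² ∩ 𝒳^{-1}`.
Stated on the Fourier side with `F = 𝓕f`, `‖f‖_{L²} = (∫‖F‖²)^{1/2}` (Plancherel, up to
a fixed constant absorbed in `c_σ`) and `‖f‖_{𝒳^τ} = ∫‖ξ‖^τ‖F(ξ)‖ dξ`. -/
theorem X_sigma_interpolation_negative (σ : ℝ) (h₁ : -(3/2) < σ) (h₂ : σ < -1) :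
    ∃ c : ℝ, 0 < c ∧ ∀ F : EuclideanSpace ℝ (Fin 3) → ℂ,
      Integrable (fun ξ => ‖F ξ‖ ^ 2) →
      Integrable (fun ξ => ‖ξ‖⁻¹ * ‖F ξ‖) →
      ∫ ξ, ‖ξ‖ ^ σ * ‖F ξ‖ ≤
        c * Real.sqrt (∫ ξ, ‖F ξ‖ ^ 2) ^ (-2 * σ - 2) *
          (∫ ξ, ‖ξ‖⁻¹ * ‖F ξ‖) ^ (2 * σ + 3) := by
  have hσ2a : -3 < 2 * σ := by linarith
  have hσ2b : 2 * σ < 0 := by linarith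
  set I1 := ∫ x in Metric.ball (0:EuclideanSpace ℝ (Fin 3)) 1, ‖x‖ ^ (2*σ) with hI1
  have hI1nn : 0 ≤ I1 :=
    setIntegral_nonneg measurableSet_ball fun x _ => Real.rpow_nonneg (norm_nonneg x) _
  refine ⟨Real.sqrt I1 + 1, by positivity, ?_⟩
  intro F hF2 hFX
  have hFm : AEStronglyMeasurable (fun ξ : EuclideanSpace ℝ (Fin 3) => ‖F ξ‖) volume := by
    have h' : AEStronglyMeasurable
        (fun ξ : EuclideanSpace ℝ (Fin 3) => Real.sqrt (‖F ξ‖ ^ 2)) volume :=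
      Real.continuous_sqrt.comp_aestronglyMeasurable hF2.aestronglyMeasurable
    exact h'.congr (ae_of_all _ fun ξ => by show √(‖F ξ‖ ^ 2) = ‖F ξ‖; rw [Real.sqrt_sq (norm_nonneg _)])
  have hwm : Measurable (fun ξ : EuclideanSpace ℝ (Fin 3) => ‖ξ‖ ^ σ) := by fun_prop
  set T := ∫ ξ : EuclideanSpace ℝ (Fin 3), ‖F ξ‖ ^ 2 with hT
  set A := Real.sqrt T with hA
  set B := ∫ ξ : EuclideanSpace ℝ (Fin 3), ‖ξ‖⁻¹ * ‖F ξ‖ with hB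
  have hTnn : 0 ≤ T := integral_nonneg fun ξ => sq_nonneg _
  have hAnn : 0 ≤ A := Real.sqrt_nonneg _
  have hXnn : ∀ ξ : EuclideanSpace ℝ (Fin 3), 0 ≤ ‖ξ‖⁻¹ * ‖F ξ‖ := fun ξ =>
    mul_nonneg (inv_nonneg.2 (norm_nonneg _)) (norm_nonneg _)
  have hBnn : 0 ≤ B := integral_nonneg hXnn
  by_cases hB0 : B = 0
  · have h0 : (fun ξ : EuclideanSpace ℝ (Fin 3) => ‖ξ‖⁻¹ * ‖F ξ‖) =ᵐ[volume] 0 :=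
      (integral_eq_zero_iff_of_nonneg hXnn hFX).mp hB0
    have hne : ∀ᵐ ξ : EuclideanSpace ℝ (Fin 3) ∂volume, ξ ≠ 0 := by
      rw [ae_iff]
      simpa using measure_singleton (0 : EuclideanSpace ℝ (Fin 3))
    have hF0 : (fun ξ : EuclideanSpace ℝ (Fin 3) => ‖ξ‖ ^ σ * ‖F ξ‖) =ᵐ[volume] 0 := by
      filter_upwards [h0, hne] with ξ hξ hξ0
      have h' : ‖ξ‖⁻¹ * ‖F ξ‖ = 0 := hξ
      rcases mul_eq_zero.mp h' with h | h
      · exact absurd (norm_eq_zero.mp (inv_eq_zero.mp h)) hξ0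
      · simp [h]
    rw [integral_congr_ae hF0]
    simp only [Pi.zero_apply, integral_zero]
    have h1 : 0 ≤ A ^ (-2*σ-2) := Real.rpow_nonneg hAnn _
    have h2' : 0 ≤ B ^ (2*σ+3) := Real.rpow_nonneg hBnn _
    positivity
  · have hBpos : 0 < B := lt_of_le_of_ne hBnn (Ne.symm hB0)
    have hTpos : 0 < T := by
      rcases lt_or_eq_of_le hTnn with h | h
      · exact h
      · exfalso
        have h0 : (fun ξ : EuclideanSpace ℝ (Fin 3) => ‖F ξ‖ ^ 2) =ᵐ[volume] 0 :=
          (integral_eq_zero_iff_of_nonneg (fun ξ => sq_nonneg _) hF2).mp h.symm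
        apply hB0
        rw [hB, ← integral_zero (EuclideanSpace ℝ (Fin 3)) ℝ (μ := volume)]
        apply integral_congr_ae
        filter_upwards [h0] with ξ hξ
        have : ‖F ξ‖ = 0 := by
          have := pow_eq_zero_iff (n := 2) (by norm_num) |>.mp hξ
          exact this
        simp [this]
    have hApos : 0 < A := Real.sqrt_pos.mpr hTpos
    set lam := (B / A) ^ (2:ℝ) with hlam_def
    have hlam : 0 < lam := Real.rpow_pos_of_pos (div_pos hBpos hApos) _
    -- square identities
    have hsqR : ∀ ξ : EuclideanSpace ℝ (Fin 3), (‖ξ‖ ^ σ) ^ (2:ℝ) = ‖ξ‖ ^ (2*σ) := fun ξ => by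
      rw [← Real.rpow_mul (norm_nonneg ξ), mul_comm]
    have hsqN : ∀ ξ : EuclideanSpace ℝ (Fin 3), (‖ξ‖ ^ σ) ^ (2:ℕ) = ‖ξ‖ ^ (2*σ) := fun ξ => by
      rw [← Real.rpow_natCast (‖ξ‖ ^ σ) 2]
      rw [show ((2:ℕ):ℝ) = (2:ℝ) by norm_num]
      exact hsqR ξ
    have hW2 : IntegrableOn (fun ξ : EuclideanSpace ℝ (Fin 3) => ‖ξ‖ ^ (2*σ))
        (Metric.ball 0 lam) := integrableOn_norm_rpow_ball hσ2a hσ2b hlam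
    have hWval : ∫ ξ in Metric.ball (0:EuclideanSpace ℝ (Fin 3)) lam, ‖ξ‖ ^ (2*σ)
        = lam ^ (2*σ+3) * I1 := by
      rw [setIntegral_norm_rpow_ball hσ2a hσ2b hlam, show 2*σ+3 = 2*σ+3 by ring]
    have hMw : MemLp (fun ξ : EuclideanSpace ℝ (Fin 3) => ‖ξ‖ ^ σ) 2
        (volume.restrict (Metric.ball 0 lam)) := by
      rw [memLp_two_iff_integrable_sq hwm.aestronglyMeasurable.restrict]
      exact hW2.congr (ae_of_all _ fun ξ => (hsqN ξ).symm)
    have hMF : MemLp (fun ξ : EuclideanSpace ℝ (Fin 3) => ‖F ξ‖) 2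
        (volume.restrict (Metric.ball 0 lam)) :=
      ((memLp_two_iff_integrable_sq hFm).mpr hF2).restrict _
    have hpq : Real.HolderConjugate 2 2 := Real.holderConjugate_iff.mpr ⟨one_lt_two, by norm_num⟩
    have h2e : ENNReal.ofReal (2:ℝ) = 2 := by norm_num
    have hCS := integral_mul_le_Lp_mul_Lq_of_nonneg
      (μ := volume.restrict (Metric.ball (0:EuclideanSpace ℝ (Fin 3)) lam)) hpq
      (ae_of_all _ fun ξ => Real.rpow_nonneg (norm_nonneg ξ) σ)
      (ae_of_all _ fun ξ => norm_nonneg (F ξ))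
      (by rw [h2e]; exact hMw) (by rw [h2e]; exact hMF)
    have e1 : ∫ ξ in Metric.ball (0:EuclideanSpace ℝ (Fin 3)) lam, (‖ξ‖ ^ σ) ^ (2:ℝ)
        = lam ^ (2*σ+3) * I1 := by
      rw [← hWval]; exact integral_congr_ae (ae_of_all _ fun ξ => hsqR ξ)
    have e2 : ∫ ξ in Metric.ball (0:EuclideanSpace ℝ (Fin 3)) lam, ‖F ξ‖ ^ (2:ℝ)
        = ∫ ξ in Metric.ball (0:EuclideanSpace ℝ (Fin 3)) lam, ‖F ξ‖ ^ 2 :=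
      integral_congr_ae (ae_of_all _ fun ξ => by
        show ‖F ξ‖ ^ (2:ℝ) = ‖F ξ‖ ^ (2:ℕ)
        rw [← Real.rpow_natCast (‖F ξ‖) 2, show ((2:ℕ):ℝ) = (2:ℝ) by norm_num])
    have e2' : ∫ ξ in Metric.ball (0:EuclideanSpace ℝ (Fin 3)) lam, ‖F ξ‖ ^ 2 ≤ T :=
      setIntegral_le_integral hF2 (ae_of_all _ fun ξ => sq_nonneg _)
    have e2nn : 0 ≤ ∫ ξ in Metric.ball (0:EuclideanSpace ℝ (Fin 3)) lam, ‖F ξ‖ ^ 2 :=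
      setIntegral_nonneg measurableSet_ball fun ξ _ => sq_nonneg _
    have hball : ∫ ξ in Metric.ball (0:EuclideanSpace ℝ (Fin 3)) lam, ‖ξ‖ ^ σ * ‖F ξ‖
        ≤ Real.sqrt I1 * lam ^ (σ+3/2) * A := by
      calc ∫ ξ in Metric.ball (0:EuclideanSpace ℝ (Fin 3)) lam, ‖ξ‖ ^ σ * ‖F ξ‖
          ≤ (∫ ξ in Metric.ball (0:EuclideanSpace ℝ (Fin 3)) lam, (‖ξ‖ ^ σ) ^ (2:ℝ)) ^ ((1:ℝ)/2)
            * (∫ ξ in Metric.ball (0:EuclideanSpace ℝ (Fin 3)) lam, ‖F ξ‖ ^ (2:ℝ)) ^ ((1:ℝ)/2) :=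
            hCS
        _ ≤ (lam ^ (2*σ+3) * I1) ^ ((1:ℝ)/2) * T ^ ((1:ℝ)/2) := by
            rw [e1, e2]
            exact mul_le_mul_of_nonneg_left
              (Real.rpow_le_rpow e2nn e2' (by norm_num))
              (Real.rpow_nonneg (mul_nonneg (Real.rpow_nonneg hlam.le _) hI1nn) _)
        _ = Real.sqrt I1 * lam ^ (σ+3/2) * A := by
            rw [Real.mul_rpow (Real.rpow_nonneg hlam.le _) hI1nn,
              ← Real.rpow_mul hlam.le, show (2*σ+3)*((1:ℝ)/2) = σ+3/2 by ring,
              ← Real.sqrt_eq_rpow, ← Real.sqrt_eq_rpow, hA]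
            ring
    have hptw : ∀ ξ : EuclideanSpace ℝ (Fin 3), ξ ∈ (Metric.ball (0:EuclideanSpace ℝ (Fin 3)) lam)ᶜ →
        ‖ξ‖ ^ σ * ‖F ξ‖ ≤ lam ^ (σ+1) * (‖ξ‖⁻¹ * ‖F ξ‖) := by
      intro ξ hξ
      have hge : lam ≤ ‖ξ‖ := by
        simpa [Metric.mem_ball, dist_zero_right, not_lt] using hξ
      have hξpos : 0 < ‖ξ‖ := lt_of_lt_of_le hlam hge
      have hkey : ‖ξ‖ ^ σ ≤ lam ^ (σ+1) * ‖ξ‖⁻¹ := by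
        have hdecomp : ‖ξ‖ ^ σ = ‖ξ‖ ^ (σ+1) * ‖ξ‖⁻¹ := by
          rw [← Real.rpow_neg_one ‖ξ‖, ← Real.rpow_add hξpos]
          norm_num
        rw [hdecomp]
        exact mul_le_mul_of_nonneg_right
          (Real.rpow_le_rpow_of_nonpos hlam hge (by linarith))
          (inv_nonneg.2 (norm_nonneg _))
      calc ‖ξ‖ ^ σ * ‖F ξ‖ ≤ (lam ^ (σ+1) * ‖ξ‖⁻¹) * ‖F ξ‖ :=
            mul_le_mul_of_nonneg_right hkey (norm_nonneg _)
        _ = lam ^ (σ+1) * (‖ξ‖⁻¹ * ‖F ξ‖) := by ring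
    have hprodm : AEStronglyMeasurable (fun ξ : EuclideanSpace ℝ (Fin 3) => ‖ξ‖ ^ σ * ‖F ξ‖)
        volume := hwm.aestronglyMeasurable.mul hFm
    have hcomplInt : IntegrableOn (fun ξ : EuclideanSpace ℝ (Fin 3) => ‖ξ‖ ^ σ * ‖F ξ‖)
        ((Metric.ball (0:EuclideanSpace ℝ (Fin 3)) lam)ᶜ) := by
      apply Integrable.mono' ((hFX.const_mul (lam ^ (σ+1))).restrict) hprodm.restrict
      filter_upwards [ae_restrict_mem measurableSet_ball.compl] with ξ hξ
      rw [Real.norm_of_nonneg (mul_nonneg (Real.rpow_nonneg (norm_nonneg _) _) (norm_nonneg _))]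
      exact hptw ξ hξ
    have hballInt : IntegrableOn (fun ξ : EuclideanSpace ℝ (Fin 3) => ‖ξ‖ ^ σ * ‖F ξ‖)
        (Metric.ball (0:EuclideanSpace ℝ (Fin 3)) lam) := by
      have hs : MemLp ((fun ξ : EuclideanSpace ℝ (Fin 3) => ‖ξ‖ ^ σ) •
          (fun ξ : EuclideanSpace ℝ (Fin 3) => ‖F ξ‖)) 1
          (volume.restrict (Metric.ball 0 lam)) :=
        hMF.smul hMw (hpqr := ENNReal.holderConjugate_iff.mpr ENNReal.inv_two_add_inv_two)
      exact (memLp_one_iff_integrable.mp hs).congr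
        (ae_of_all _ fun ξ => by simp [Pi.smul_apply, smul_eq_mul])
    have hint : Integrable (fun ξ : EuclideanSpace ℝ (Fin 3) => ‖ξ‖ ^ σ * ‖F ξ‖) volume := by
      rw [← integrableOn_univ,
        ← Set.union_compl_self (Metric.ball (0:EuclideanSpace ℝ (Fin 3)) lam)]
      exact hballInt.union hcomplInt
    have hcompl : ∫ ξ in (Metric.ball (0:EuclideanSpace ℝ (Fin 3)) lam)ᶜ, ‖ξ‖ ^ σ * ‖F ξ‖
        ≤ lam ^ (σ+1) * B := by
      calc ∫ ξ in (Metric.ball (0:EuclideanSpace ℝ (Fin 3)) lam)ᶜ, ‖ξ‖ ^ σ * ‖F ξ‖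
          ≤ ∫ ξ in (Metric.ball (0:EuclideanSpace ℝ (Fin 3)) lam)ᶜ,
              lam ^ (σ+1) * (‖ξ‖⁻¹ * ‖F ξ‖) := by
            refine integral_mono_ae hcomplInt ((hFX.const_mul _).restrict) ?_
            filter_upwards [ae_restrict_mem measurableSet_ball.compl] with ξ hξ
            exact hptw ξ hξ
        _ = lam ^ (σ+1) * ∫ ξ in (Metric.ball (0:EuclideanSpace ℝ (Fin 3)) lam)ᶜ,
              ‖ξ‖⁻¹ * ‖F ξ‖ := integral_const_mul _ _
        _ ≤ lam ^ (σ+1) * B :=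
            mul_le_mul_of_nonneg_left
              (setIntegral_le_integral hFX (ae_of_all _ hXnn))
              (Real.rpow_nonneg hlam.le _)
    have hmain : ∫ ξ : EuclideanSpace ℝ (Fin 3), ‖ξ‖ ^ σ * ‖F ξ‖
        ≤ Real.sqrt I1 * lam ^ (σ+3/2) * A + lam ^ (σ+1) * B := by
      rw [← integral_add_compl measurableSet_ball hint]
      exact add_le_add hball hcompl
    have hd : 0 < B / A := div_pos hBpos hApos
    have l1 : lam ^ (σ+3/2) = B ^ (2*σ+3) / A ^ (2*σ+3) := by
      rw [hlam_def, ← Real.rpow_mul hd.le, show (2:ℝ)*(σ+3/2) = 2*σ+3 by ring,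
        Real.div_rpow hBpos.le hApos.le]
    have l2 : lam ^ (σ+1) = B ^ (2*σ+2) / A ^ (2*σ+2) := by
      rw [hlam_def, ← Real.rpow_mul hd.le, show (2:ℝ)*(σ+1) = 2*σ+2 by ring,
        Real.div_rpow hBpos.le hApos.le]
    have e3 : B ^ (2*σ+3) = B ^ (2*σ+2) * B := by
      rw [show 2*σ+3 = (2*σ+2)+1 by ring, Real.rpow_add_one hBpos.ne']
    have e4 : A ^ (2*σ+3) = A ^ (2*σ+2) * A := by
      rw [show 2*σ+3 = (2*σ+2)+1 by ring, Real.rpow_add_one hApos.ne']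
    have e5 : A ^ (-2*σ-2) = (A ^ (2*σ+2))⁻¹ := by
      rw [show -2*σ-2 = -(2*σ+2) by ring, Real.rpow_neg hApos.le]
    have hPA : 0 < A ^ (2*σ+2) := Real.rpow_pos_of_pos hApos _
    have halg : Real.sqrt I1 * lam ^ (σ+3/2) * A + lam ^ (σ+1) * B
        = (Real.sqrt I1 + 1) * A ^ (-2*σ-2) * B ^ (2*σ+3) := by
      rw [l1, l2, e3, e4, e5]
      field_simp
    exact hmain.trans_eq halg
end
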